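/- Termination of Graeffe's iteration: let b ∈ ℂ[z] be a polynomial of degree d ≥ 1 having exactly h roots of modulus strictly less than 1 and d − h roots of modulus strictly greater than 1 (no roots of modulus 1), all counted with multiplicity. Define the Graeffe sequence by b_0 = b and, for k ≥ 0, b_{k+1} the unique polynomial with b_{k+1}(z²) = b_k(z)·b_k(−z). Then there exists k ≥ 0 such that the coefficient of z^h in b_k has modulus strictly greater than the sum of the moduli of all the other coefficients of b_k. -/

import Mathlib

open Polynomial

noncomputable section

namespace Stmt14

open Multiset NNReal


lemma comp_X_sq_injective {p q : ℂ[X]} (h : p.comp (X^2) = q.comp (X^2)) : p = q := by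
  apply Polynomial.funext
  intro w
  obtain ⟨z, hz⟩ := IsAlgClosed.exists_pow_nat_eq (k := ℂ) w (n := 2) (by norm_num)
  have h2 := congrArg (Polynomial.eval z) h
  simpa [eval_comp, hz] using h2

lemma seq_form (b : ℂ[X]) (hb : b ≠ 0)
    (seq : ℕ → ℂ[X]) (hseq0 : seq 0 = b)
    (hseq : ∀ k, (seq (k+1)).comp (X^2) = seq k * (seq k).comp (-X)) (k : ℕ) :
    ∃ γ : ℂ, γ ≠ 0 ∧
      seq k = C γ * ((b.roots.map (· ^ 2^k)).map (fun r => X - C r)).prod := by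
  induction k with
  | zero =>
    refine ⟨b.leadingCoeff, leadingCoeff_ne_zero.2 hb, ?_⟩
    have h1 := Polynomial.Splits.eq_prod_roots (f := b)
      (IsAlgClosed.splits b)
    rw [hseq0]
    convert h1 using 3
    simp
  | succ k ih =>
    obtain ⟨γ, hγ, hk⟩ := ih
    refine ⟨(-1)^(Multiset.card b.roots) * γ^2, by simp [hγ], ?_⟩
    apply comp_X_sq_injective
    rw [hseq k, hk]
    set s := b.roots.map (· ^ 2^k) with hs
    have h1 : (C γ * (s.map fun r => X - C r).prod).comp (-X)
        = C γ * (s.map fun r => -X - C r).prod := by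
      rw [mul_comp, C_comp, multiset_prod_comp, Multiset.map_map]
      congr 1
      exact congrArg _ (Multiset.map_congr rfl fun x _ => by simp)
    rw [h1]
    have h2 : (C γ * (s.map fun r => X - C r).prod) * (C γ * (s.map fun r => -X - C r).prod)
        = C (γ^2) * ((s.map fun r => (X - C r) * (-X - C r)).prod) := by
      rw [Multiset.prod_map_mul]; ring_nf; rw [C_pow]; ring
    rw [h2]
    have h3 : (s.map fun r => (X - C r) * (-X - C r)).prod
        = (-1)^(Multiset.card s) * (s.map fun r => X^2 - C (r^2)).prod := by
      have heq : ∀ r : ℂ, (X - C r) * (-X - C r) = (-1) * (X^2 - C (r^2)) := by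
        intro r; simp only [map_pow]; ring
      rw [Multiset.map_congr rfl fun x _ => heq x]
      rw [show (fun r : ℂ => (-1 : ℂ[X]) * (X^2 - C (r^2)))
        = (fun r => (fun _ : ℂ => (-1:ℂ[X])) r * (fun r : ℂ => X^2 - C (r^2)) r) from rfl]
      rw [Multiset.prod_map_mul, Multiset.map_const', Multiset.prod_replicate]
    rw [h3]
    have hcard : Multiset.card s = Multiset.card b.roots := by simp [hs]
    rw [mul_comp, C_comp, multiset_prod_comp]
    simp only [Multiset.map_map, Function.comp_def, sub_comp, X_comp, C_comp, hs]
    have h5 : (b.roots.map (fun x => X^2 - C (x ^ 2^(k+1)))).prod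
        = (b.roots.map (fun x => X^2 - C ((x ^ 2^k)^2))).prod := by
      refine congrArg _ (Multiset.map_congr rfl fun x _ => ?_)
      rw [← pow_mul, ← pow_succ]
    rw [h5, hcard]; simp only [map_mul, map_pow, map_neg, map_one]
    ring


lemma nnnorm_esymm_le (s : Multiset ℂ) (n : ℕ) :
    ‖s.esymm n‖₊ ≤ (s.map (fun z => ‖z‖₊)).esymm n := by
  unfold Multiset.esymm
  refine le_trans (Multiset.le_sum_of_subadditive (fun z : ℂ => ‖z‖₊) nnnorm_zero.le
    (fun a b => nnnorm_add_le a b) _) ?_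
  rw [Multiset.map_map, Multiset.powersetCard_map, Multiset.map_map]
  refine le_of_eq (congrArg Multiset.sum (Multiset.map_congr rfl fun t _ => ?_))
  exact map_multiset_prod (nnnormHom : ℂ →*₀ ℝ≥0) t

lemma esymm_le (s : Multiset ℝ≥0) (n : ℕ) (B : ℝ≥0)
    (hB : ∀ t ∈ s.powersetCard n, Multiset.prod t ≤ B) :
    s.esymm n ≤ ((Multiset.card s).choose n : ℝ≥0) * B := by
  unfold Multiset.esymm
  calc ((s.powersetCard n).map Multiset.prod).sum
      ≤ ((s.powersetCard n).map (fun _ => B)).sum :=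
        Multiset.sum_map_le_sum_map _ _ hB
    _ = (Multiset.card (s.powersetCard n)) • B := by
        rw [Multiset.map_const', Multiset.sum_replicate]
    _ = ((Multiset.card s).choose n : ℝ≥0) * B := by
        rw [Multiset.card_powersetCard, nsmul_eq_mul]

lemma prod_le_of_le (s t : Multiset ℝ≥0) (h1 : ∀ x ∈ s, 1 ≤ x) (hts : t ≤ s) :
    t.prod ≤ s.prod := by
  rw [← tsub_add_cancel_of_le hts, Multiset.prod_add]
  exact le_mul_of_one_le_left' (Multiset.one_le_prod_of_one_le fun x hx =>
    h1 x (Multiset.mem_of_le tsub_le_self hx))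

lemma prod_le_mul_of_proper (s t : Multiset ℝ≥0) (a : ℝ≥0)
    (h1 : ∀ x ∈ s, 1 ≤ x) (ha : ∀ x ∈ s, 1 ≤ a * x) (hts : t ≤ s)
    (hcard : Multiset.card t < Multiset.card s) : t.prod ≤ a * s.prod := by
  have hu : (s - t) + t = s := tsub_add_cancel_of_le hts
  have hucard : Multiset.card (s - t) ≠ 0 := by
    intro h0
    have := congrArg Multiset.card hu
    rw [Multiset.card_add, h0, zero_add] at this
    omega
  obtain ⟨x, hx⟩ := Multiset.exists_mem_of_ne_zero
    (s := s - t) (by intro h0; rw [h0] at hucard; simp at hucard)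
  have hxs : x ∈ s := Multiset.mem_of_le tsub_le_self hx
  have hxu : x ≤ (s - t).prod :=
    Multiset.single_le_prod (fun y hy => h1 y (Multiset.mem_of_le tsub_le_self hy)) x hx
  calc t.prod = 1 * t.prod := (one_mul _).symm
    _ ≤ (a * x) * t.prod := mul_le_mul_left (ha x hxs) _
    _ = a * (x * t.prod) := by ring
    _ ≤ a * ((s - t).prod * t.prod) := mul_le_mul_right (mul_le_mul_left hxu _) _
    _ = a * s.prod := by rw [← Multiset.prod_add, hu]

lemma nnnorm_coeff_le (s : Multiset ℂ) {j : ℕ} (hj : j ≤ Multiset.card s) :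
    ‖((s.map fun r => X - C r).prod).coeff j‖₊
      ≤ (s.map (fun z => ‖z‖₊)).esymm (Multiset.card s - j) := by
  rw [Multiset.prod_X_sub_C_coeff s hj, nnnorm_mul, nnnorm_pow, nnnorm_neg, nnnorm_one,
    one_pow, one_mul]
  exact nnnorm_esymm_le s _

lemma sup_lt_one (s : Multiset ℝ≥0) (h : ∀ x ∈ s, x < 1) : s.sup < 1 := by
  induction s using Multiset.induction with
  | empty => simpa using zero_lt_one
  | cons a s ih =>
    rw [Multiset.sup_cons]
    exact sup_lt_iff.mpr ⟨h a (Multiset.mem_cons_self a s),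
      ih fun x hx => h x (Multiset.mem_cons_of_mem hx)⟩

lemma choose_le_two_pow (n k : ℕ) : n.choose k ≤ 2 ^ n := by
  rcases le_or_gt k n with h | h
  · calc n.choose k ≤ ∑ m ∈ Finset.range (n+1), n.choose m :=
        Finset.single_le_sum (fun i _ => Nat.zero_le _)
          (Finset.mem_range.mpr (Nat.lt_succ_of_le h))
    _ = 2^n := Nat.sum_range_choose n
  · rw [Nat.choose_eq_zero_of_lt h]; exact Nat.zero_le _



end Stmt14

open Stmt14 Multiset NNReal in
/-- termination of Graeffe's iteration: if `b` has degree `d ≥ 1`, `h` roots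
of modulus `< 1` and `d − h` roots of modulus `> 1` (none of modulus 1), then along the
Graeffe sequence `b₀ = b`, `b_{k+1}(z²) = b_k(z) b_k(−z)` there is a `k` at which the
coefficient of `z^h` dominates the sum of the moduli of all the other coefficients. -/
theorem stmt_14 (b : Polynomial ℂ) (d h : ℕ) (hd : 1 ≤ d) (hh : h ≤ d)
    (hb : b ≠ 0) (hdeg : b.natDegree = d)
    (hlt : Multiset.card (b.roots.filter fun z => ‖z‖ < 1) = h)
    (hgt : Multiset.card (b.roots.filter fun z => 1 < ‖z‖) = d - h)
    (hone : ∀ z ∈ b.roots, ‖z‖ ≠ 1)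
    (seq : ℕ → Polynomial ℂ) (hseq0 : seq 0 = b)
    (hseq : ∀ k : ℕ, (seq (k + 1)).comp (X ^ 2) = seq k * (seq k).comp (-X)) :
    ∃ k : ℕ, (∑ i ∈ (Finset.range (d + 1)).erase h, ‖(seq k).coeff i‖) <
      ‖(seq k).coeff h‖ := by
  classical
  have hsplits : Multiset.card b.roots = d := by
    rw [← hdeg]
    exact Polynomial.splits_iff_card_roots.mp (IsAlgClosed.splits b)
  set sm := b.roots.filter (fun z => ‖z‖ < 1) with hsm
  set lg := b.roots.filter (fun z => 1 < ‖z‖) with hlg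
  have hadd : sm + lg = b.roots := by
    have hfc : Multiset.filter (fun z => 1 < ‖z‖) b.roots
        = Multiset.filter (fun z => ¬ ‖z‖ < 1) b.roots := by
      refine Multiset.filter_congr ?_
      intro z hz
      have h1 := hone z hz
      constructor
      · intro hgt1; exact not_lt.mpr hgt1.le
      · intro hnlt; exact lt_of_le_of_ne (not_lt.mp hnlt) (Ne.symm h1)
    rw [hsm, hlg, hfc, Multiset.filter_add_not (fun z => ‖z‖ < 1) b.roots]
  -- moduli
  set smA : Multiset ℝ≥0 := sm.map (fun z => ‖z‖₊) with hsmA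
  set lgA : Multiset ℝ≥0 := lg.map (fun z => ‖z‖₊) with hlgA
  have hsm_lt : ∀ x ∈ smA, x < 1 := by
    intro x hx
    obtain ⟨z, hz, rfl⟩ := Multiset.mem_map.mp hx
    rw [hsm] at hz
    have h2 : ‖z‖ < 1 := (Multiset.mem_filter.mp hz).2
    exact_mod_cast h2
  have hlg_gt : ∀ x ∈ lgA, 1 < x := by
    intro x hx
    obtain ⟨z, hz, rfl⟩ := Multiset.mem_map.mp hx
    rw [hlg] at hz
    have h2 : 1 < ‖z‖ := (Multiset.mem_filter.mp hz).2
    exact_mod_cast h2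
  -- the uniform gap q
  set q : ℝ≥0 := smA.sup ⊔ (lgA.map (fun x => x⁻¹)).sup with hqdef
  have hq1 : q < 1 := by
    rw [hqdef]
    refine sup_lt_iff.mpr ⟨sup_lt_one _ hsm_lt, sup_lt_one _ ?_⟩
    intro x hx
    obtain ⟨y, hy, rfl⟩ := Multiset.mem_map.mp hx
    exact inv_lt_one_of_one_lt₀ (hlg_gt y hy)
  have hq_sm : ∀ x ∈ smA, x ≤ q := fun x hx => le_trans (Multiset.le_sup hx) le_sup_left
  have hq_lg : ∀ x ∈ lgA, 1 ≤ q * x := by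
    intro x hx
    have hx0 : x ≠ 0 := fun h0 => by simp [h0] at hx; exact absurd (hlg_gt 0 (h0 ▸ hx)) (by simp)
    have hinv : x⁻¹ ≤ q :=
      le_trans (Multiset.le_sup (Multiset.mem_map_of_mem _ hx)) le_sup_right
    calc (1:ℝ≥0) = x⁻¹ * x := (inv_mul_cancel₀ hx0).symm
      _ ≤ q * x := mul_le_mul_left hinv x
  have hlg1 : ∀ x ∈ lgA, 1 ≤ x := fun x hx => (hlg_gt x hx).le
  set T : ℝ≥0 := lgA.prod with hTdef
  have hT1 : 1 ≤ T := Multiset.one_le_prod_of_one_le hlg1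
  -- cards
  have hcsm : Multiset.card smA = h := by rw [hsmA, Multiset.card_map]; exact hlt
  have hclg : Multiset.card lgA = d - h := by rw [hlgA, Multiset.card_map]; exact hgt
  -- constants
  set F : ℝ≥0 := 2 ^ d with hF
  have hF1 : (1:ℝ≥0) ≤ F := one_le_pow_of_one_le' (by norm_num) d
  set E : ℝ≥0 := F * F with hE
  have hFE : F ≤ E := le_mul_of_one_le_left' hF1
  set CC : ℝ≥0 := ((d:ℝ≥0)+2) * (((d:ℝ≥0)+1) * E) with hCC
  set K : ℝ≥0 := CC + 1 with hK
  have hK0 : 0 < K := by rw [hK]; positivity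
  obtain ⟨n, hn⟩ : ∃ n, q ^ n < K⁻¹ :=
    NNReal.exists_pow_lt_of_lt_one (by positivity) hq1
  -- instantiate at k = n
  refine ⟨n, ?_⟩
  obtain ⟨γ, hγ, hform⟩ := seq_form b hb seq hseq0 hseq n
  set e : ℕ := 2 ^ n with he
  set sP := sm.map (fun r => r ^ e) with hsP
  set sQ := lg.map (fun r => r ^ e) with hsQ
  set P := (sP.map fun r => X - C r).prod with hPdef
  set Q := (sQ.map fun r => X - C r).prod with hQdef
  have hPQ : seq n = C γ * (P * Q) := by
    rw [hform, ← hadd, Multiset.map_add, Multiset.map_add, Multiset.prod_add]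
  -- moduli of the shifted roots
  have hsPA : sP.map (fun z => ‖z‖₊) = smA.map (fun x => x ^ e) := by
    rw [hsP, hsmA, Multiset.map_map, Multiset.map_map]
    exact Multiset.map_congr rfl fun x _ => by simp [nnnorm_pow]
  have hsQA : sQ.map (fun z => ‖z‖₊) = lgA.map (fun x => x ^ e) := by
    rw [hsQ, hlgA, Multiset.map_map, Multiset.map_map]
    exact Multiset.map_congr rfl fun x _ => by simp [nnnorm_pow]
  have hcP : Multiset.card sP = h := by rw [hsP, Multiset.card_map]; exact hlt
  have hcQ : Multiset.card sQ = d - h := by rw [hsQ, Multiset.card_map]; exact hgt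
  -- element bounds
  have hsmE : ∀ x ∈ smA.map (fun x => x ^ e), x ≤ q ^ e := by
    intro x hx; obtain ⟨y, hy, rfl⟩ := Multiset.mem_map.mp hx
    exact pow_le_pow_left₀ (_root_.zero_le) (hq_sm y hy) e
  have hlgE1 : ∀ x ∈ lgA.map (fun x => x ^ e), 1 ≤ x := by
    intro x hx; obtain ⟨y, hy, rfl⟩ := Multiset.mem_map.mp hx
    rw [← one_pow e]; exact pow_le_pow_left₀ (_root_.zero_le) (hlg1 y hy) e
  have hlgEq : ∀ x ∈ lgA.map (fun x => x ^ e), 1 ≤ q ^ e * x := by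
    intro x hx; obtain ⟨y, hy, rfl⟩ := Multiset.mem_map.mp hx
    rw [← mul_pow, ← one_pow e]
    exact pow_le_pow_left₀ (_root_.zero_le) (hq_lg y hy) e
  have hlgEprod : (lgA.map (fun x => x ^ e)).prod = T ^ e := by
    have := Multiset.prod_map_pow (m := lgA) (f := id) (n := e)
    simpa using this
  -- P facts
  have hPmonic : P.Monic :=
    monic_multiset_prod_of_monic _ _ fun i _ => monic_X_sub_C i
  have hPdeg : P.natDegree = h := by
    rw [hPdef, natDegree_multiset_prod_X_sub_C_eq_card, hcP]
  have hPh : P.coeff h = 1 := by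
    rw [← hPdeg]; exact hPmonic.coeff_natDegree
  have hPzero : ∀ j, h < j → P.coeff j = 0 := fun j hj =>
    coeff_eq_zero_of_natDegree_lt (by rw [hPdeg]; exact hj)
  have hqe1 : q ^ e ≤ 1 := pow_le_one₀ (_root_.zero_le) hq1.le
  have hPj : ∀ j, j < h → ‖P.coeff j‖₊ ≤ F * q ^ e := by
    intro j hj
    have h1 : ‖P.coeff j‖₊ ≤ (sP.map (fun z => ‖z‖₊)).esymm (Multiset.card sP - j) :=
      nnnorm_coeff_le sP (by omega)
    rw [hsPA] at h1
    refine h1.trans ?_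
    have h2 : ∀ t ∈ (smA.map (fun x => x ^ e)).powersetCard (Multiset.card sP - j),
        Multiset.prod t ≤ q ^ e := by
      intro t ht
      obtain ⟨hts, htc⟩ := Multiset.mem_powersetCard.mp ht
      have h3 : t.prod ≤ (q ^ e) ^ Multiset.card t :=
        Multiset.prod_le_pow_card t _ fun x hx => hsmE x (Multiset.mem_of_le hts hx)
      refine h3.trans ?_
      calc (q ^ e) ^ Multiset.card t ≤ (q ^ e) ^ 1 :=
            pow_le_pow_of_le_one (_root_.zero_le) hqe1 (by omega)
        _ = q ^ e := pow_one _
    refine (esymm_le _ _ _ h2).trans (mul_le_mul_left ?_ _)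
    have h4 : ((Multiset.card (smA.map (fun x => x ^ e))).choose
        (Multiset.card sP - j) : ℝ≥0) ≤ ((2:ℝ≥0) ^ (Multiset.card (smA.map (fun x => x ^ e)))) := by
      rw [show ((2:ℝ≥0) ^ (Multiset.card (smA.map (fun x => x ^ e)))) =
          ((2 ^ (Multiset.card (smA.map (fun x => x ^ e))) : ℕ) : ℝ≥0) by push_cast; ring]
      exact Nat.cast_le.mpr (choose_le_two_pow _ _)
    refine h4.trans ?_
    rw [Multiset.card_map, hcsm, hF]
    exact pow_le_pow_right₀ (by norm_num) hh
  -- Q facts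
  have hQmonic : Q.Monic :=
    monic_multiset_prod_of_monic _ _ fun i _ => monic_X_sub_C i
  have hQdeg : Q.natDegree = d - h := by
    rw [hQdef, natDegree_multiset_prod_X_sub_C_eq_card, hcQ]
  have hQtop : Q.coeff (d - h) = 1 := by
    rw [← hQdeg]; exact hQmonic.coeff_natDegree
  have hQzero : ∀ j, d - h < j → Q.coeff j = 0 := fun j hj =>
    coeff_eq_zero_of_natDegree_lt (by rw [hQdeg]; exact hj)
  have hchooseQ : ∀ m : ℕ, (((Multiset.card (lgA.map (fun x => x ^ e))).choose m : ℕ) : ℝ≥0) ≤ F := by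
    intro m
    rw [hF, show ((2:ℝ≥0) ^ d) = ((2 ^ d : ℕ) : ℝ≥0) by push_cast; ring]
    refine Nat.cast_le.mpr ?_
    refine (choose_le_two_pow _ m).trans ?_
    rw [Multiset.card_map, hclg]
    exact Nat.pow_le_pow_right (by norm_num) (by omega)
  have hQj : ∀ j, j ≤ d - h → ‖Q.coeff j‖₊ ≤ F * T ^ e := by
    intro j hj
    have h1 : ‖Q.coeff j‖₊ ≤ (sQ.map (fun z => ‖z‖₊)).esymm (Multiset.card sQ - j) :=
      nnnorm_coeff_le sQ (by omega)
    rw [hsQA] at h1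
    refine h1.trans ?_
    have h2 : ∀ t ∈ (lgA.map (fun x => x ^ e)).powersetCard (Multiset.card sQ - j),
        Multiset.prod t ≤ T ^ e := by
      intro t ht
      obtain ⟨hts, htc⟩ := Multiset.mem_powersetCard.mp ht
      rw [← hlgEprod]
      exact prod_le_of_le _ t hlgE1 hts
    exact (esymm_le _ _ _ h2).trans (mul_le_mul_left (hchooseQ _) _)
  have hQj1 : ∀ j, 1 ≤ j → j ≤ d - h → ‖Q.coeff j‖₊ ≤ F * (q ^ e * T ^ e) := by
    intro j hj1 hj
    have h1 : ‖Q.coeff j‖₊ ≤ (sQ.map (fun z => ‖z‖₊)).esymm (Multiset.card sQ - j) :=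
      nnnorm_coeff_le sQ (by omega)
    rw [hsQA] at h1
    refine h1.trans ?_
    have h2 : ∀ t ∈ (lgA.map (fun x => x ^ e)).powersetCard (Multiset.card sQ - j),
        Multiset.prod t ≤ q ^ e * T ^ e := by
      intro t ht
      obtain ⟨hts, htc⟩ := Multiset.mem_powersetCard.mp ht
      rw [← hlgEprod]
      refine prod_le_mul_of_proper _ t (q ^ e) hlgE1 hlgEq hts ?_
      have e1 : Multiset.card t = d - h - j := by rw [htc, hcQ]
      have e2 : Multiset.card (Multiset.map (fun x : ℝ≥0 => x ^ e) lgA) = d - h := by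
        rw [Multiset.card_map, hclg]
      omega
    exact (esymm_le _ _ _ h2).trans (mul_le_mul_left (hchooseQ _) _)
  have hQ0 : ‖Q.coeff 0‖₊ = T ^ e := by
    rw [hQdef, coeff_zero_eq_eval_zero, eval_multiset_prod, Multiset.map_map]
    have h1 : sQ.map (fun r => eval 0 (X - C r)) = sQ.map (fun r => -r) :=
      Multiset.map_congr rfl fun x _ => by simp
    rw [show (Multiset.map ((fun p => eval 0 p) ∘ fun r => X - C r) sQ) =
        sQ.map (fun r => eval 0 (X - C r)) from rfl, h1]
    rw [show ‖(Multiset.map (fun r => -r) sQ).prod‖₊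
        = ((Multiset.map (fun r => -r) sQ).map (fun z : ℂ => ‖z‖₊)).prod from
      map_multiset_prod (nnnormHom : ℂ →*₀ ℝ≥0) _]
    rw [Multiset.map_map]
    have h2 : sQ.map ((fun z : ℂ => ‖z‖₊) ∘ fun r => -r) = sQ.map (fun z => ‖z‖₊) :=
      Multiset.map_congr rfl fun x _ => by simp
    rw [h2, hsQA, hlgEprod]
  -- per-term bound
  set u : ℝ≥0 := E * (q ^ e * T ^ e) with hu
  have hterm : ∀ a c : ℕ, ¬(a = h ∧ c = 0) → ‖P.coeff a * Q.coeff c‖₊ ≤ u := by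
    intro a c hac
    rcases lt_trichotomy a h with hah | heq | hah
    · rcases le_or_gt c (d - h) with hc | hc
      · rw [nnnorm_mul]
        calc ‖P.coeff a‖₊ * ‖Q.coeff c‖₊ ≤ (F * q ^ e) * (F * T ^ e) :=
              mul_le_mul' (hPj a hah) (hQj c hc)
          _ = u := by rw [hu, hE]; ring
      · rw [hQzero c hc, mul_zero, nnnorm_zero]; exact _root_.zero_le
    · have hc0 : c ≠ 0 := fun h0 => hac ⟨heq, h0⟩
      rcases le_or_gt c (d - h) with hc | hc
      · rw [heq, nnnorm_mul, hPh, nnnorm_one, one_mul]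
        refine (hQj1 c (by omega) hc).trans ?_
        rw [hu]
        exact mul_le_mul_left hFE _
      · rw [hQzero c hc, mul_zero, nnnorm_zero]; exact _root_.zero_le
    · rw [hPzero a hah, zero_mul, nnnorm_zero]; exact _root_.zero_le
  set V : ℝ≥0 := ((d:ℝ≥0)+1) * u with hV
  -- claim A: bound on each off-coefficient
  have hcoeffA : ∀ i, i ≠ h → i ≤ d → ‖(P*Q).coeff i‖₊ ≤ V := by
    intro i hne hle
    rw [coeff_mul]
    refine le_trans (nnnorm_sum_le _ _) ?_
    have h1 : ∀ p ∈ Finset.HasAntidiagonal.antidiagonal i, ‖P.coeff p.1 * Q.coeff p.2‖₊ ≤ u := by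
      intro p hp
      have hpsum : p.1 + p.2 = i := Finset.HasAntidiagonal.mem_antidiagonal.mp hp
      refine hterm p.1 p.2 ?_
      rintro ⟨h1', h2'⟩
      exact hne (by omega)
    refine le_trans (Finset.sum_le_card_nsmul _ _ u h1) ?_
    rw [Finset.Nat.card_antidiagonal, nsmul_eq_mul, hV]
    refine mul_le_mul_left ?_ _
    have : ((i+1 : ℕ) : ℝ≥0) ≤ ((d+1 : ℕ) : ℝ≥0) := Nat.cast_le.mpr (by omega)
    push_cast at this ⊢
    exact this
  -- claim B: the main coefficient nearly equals T^e
  have hB : T ^ e ≤ ‖(P*Q).coeff h‖₊ + V := by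
    have hmem : ((h,0) : ℕ × ℕ) ∈ Finset.HasAntidiagonal.antidiagonal h := by
      rw [Finset.HasAntidiagonal.mem_antidiagonal]
      simp
    have hsplit := Finset.add_sum_erase (Finset.HasAntidiagonal.antidiagonal h)
      (fun p : ℕ × ℕ => P.coeff p.1 * Q.coeff p.2) hmem
    have hmain : ‖P.coeff h * Q.coeff 0‖₊ = T ^ e := by
      rw [nnnorm_mul, hPh, nnnorm_one, one_mul, hQ0]
    have hrepr : P.coeff h * Q.coeff 0 = (P*Q).coeff h
        - ∑ p ∈ (Finset.HasAntidiagonal.antidiagonal h).erase (h,0), P.coeff p.1 * Q.coeff p.2 := by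
      rw [coeff_mul, ← hsplit]; ring
    have hrest : ‖∑ p ∈ (Finset.HasAntidiagonal.antidiagonal h).erase (h,0),
        P.coeff p.1 * Q.coeff p.2‖₊ ≤ V := by
      refine le_trans (nnnorm_sum_le _ _) ?_
      have h1 : ∀ p ∈ (Finset.HasAntidiagonal.antidiagonal h).erase (h,0),
          ‖P.coeff p.1 * Q.coeff p.2‖₊ ≤ u := by
        intro p hp
        have hp1 := Finset.mem_of_mem_erase hp
        have hpne := Finset.ne_of_mem_erase hp
        have hpsum : p.1 + p.2 = h := Finset.HasAntidiagonal.mem_antidiagonal.mp hp1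
        refine hterm p.1 p.2 ?_
        rintro ⟨h1', h2'⟩
        exact hpne (Prod.ext h1' h2')
      refine le_trans (Finset.sum_le_card_nsmul _ _ u h1) ?_
      rw [nsmul_eq_mul, hV]
      refine mul_le_mul_left ?_ _
      have hcard : ((Finset.HasAntidiagonal.antidiagonal h).erase (h,0)).card ≤ d + 1 := by
        refine le_trans (Finset.card_erase_le) ?_
        rw [Finset.Nat.card_antidiagonal]
        omega
      have : (((Finset.HasAntidiagonal.antidiagonal h).erase (h,0)).card : ℝ≥0) ≤ ((d+1 : ℕ) : ℝ≥0) :=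
        Nat.cast_le.mpr hcard
      push_cast at this ⊢
      exact this
    calc T ^ e = ‖P.coeff h * Q.coeff 0‖₊ := hmain.symm
      _ ≤ ‖(P*Q).coeff h‖₊ + ‖∑ p ∈ (Finset.HasAntidiagonal.antidiagonal h).erase (h,0),
            P.coeff p.1 * Q.coeff p.2‖₊ := by rw [hrepr]; exact nnnorm_sub_le _ _
      _ ≤ ‖(P*Q).coeff h‖₊ + V := add_le_add_right hrest _
  -- sum over the other coefficients
  have hsumA : (∑ i ∈ (Finset.range (d + 1)).erase h, ‖(P*Q).coeff i‖₊)
      ≤ ((d:ℝ≥0)+1) * V := by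
    have h1 : ∀ i ∈ (Finset.range (d + 1)).erase h, ‖(P*Q).coeff i‖₊ ≤ V := by
      intro i hi
      have hne := Finset.ne_of_mem_erase hi
      have hle : i ≤ d := by
        have := Finset.mem_range.mp (Finset.mem_of_mem_erase hi)
        omega
      exact hcoeffA i hne hle
    refine le_trans (Finset.sum_le_card_nsmul _ _ V h1) ?_
    rw [nsmul_eq_mul]
    refine mul_le_mul_left ?_ _
    have hcard : ((Finset.range (d + 1)).erase h).card ≤ d + 1 :=
      le_trans (Finset.card_erase_le) (by rw [Finset.card_range])
    have : (((Finset.range (d + 1)).erase h).card : ℝ≥0) ≤ ((d+1 : ℕ) : ℝ≥0) :=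
      Nat.cast_le.mpr hcard
    push_cast at this ⊢
    exact this
  -- numeric smallness
  have hqe : q ^ e ≤ q ^ n := pow_le_pow_of_le_one (_root_.zero_le) hq1.le
    (le_of_lt (Nat.lt_two_pow_self (n := n)))
  have hsmall : CC * q ^ e < 1 := by
    have h1 : CC * q ^ e ≤ CC * K⁻¹ :=
      mul_le_mul_right (le_of_lt (lt_of_le_of_lt hqe hn)) CC
    refine lt_of_le_of_lt h1 ?_
    rw [← div_eq_mul_inv]
    rw [div_lt_one hK0, hK]
    exact lt_add_of_pos_right _ one_pos
  have hTe1 : (1:ℝ≥0) ≤ T ^ e := one_le_pow_of_one_le' hT1 e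
  have hchain : (∑ i ∈ (Finset.range (d + 1)).erase h, ‖(P*Q).coeff i‖₊) + V < T ^ e := by
    have h1 : (∑ i ∈ (Finset.range (d + 1)).erase h, ‖(P*Q).coeff i‖₊) + V
        ≤ ((d:ℝ≥0)+1) * V + V := add_le_add_left hsumA _
    have h2 : ((d:ℝ≥0)+1) * V + V = CC * q ^ e * T ^ e := by
      rw [hV, hu, hCC]; ring
    have h3 : CC * q ^ e * T ^ e < 1 * T ^ e :=
      mul_lt_mul_of_pos_right hsmall (lt_of_lt_of_le one_pos hTe1)
    rw [one_mul] at h3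
    exact lt_of_le_of_lt (h1.trans (le_of_eq h2)) h3
  have hfinal : (∑ i ∈ (Finset.range (d + 1)).erase h, ‖(P*Q).coeff i‖₊)
      < ‖(P*Q).coeff h‖₊ := by
    have := lt_of_lt_of_le hchain hB
    exact lt_of_add_lt_add_right this
  -- convert back to Complex.abs
  have habs : ∀ i, ‖(seq n).coeff i‖
      = ((‖γ‖₊ * ‖(P*Q).coeff i‖₊ : ℝ≥0) : ℝ) := by
    intro i
    rw [hPQ, coeff_C_mul]
    rw [← coe_nnnorm, nnnorm_mul]
  simp only [habs]
  rw [← NNReal.coe_sum]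
  rw [NNReal.coe_lt_coe]
  calc ∑ i ∈ (Finset.range (d + 1)).erase h, ‖γ‖₊ * ‖(P*Q).coeff i‖₊
      = ‖γ‖₊ * ∑ i ∈ (Finset.range (d + 1)).erase h, ‖(P*Q).coeff i‖₊ :=
        (Finset.mul_sum _ _ _).symm
    _ < ‖γ‖₊ * ‖(P*Q).coeff h‖₊ :=
        mul_lt_mul_of_pos_left hfinal (nnnorm_pos.mpr hγ)
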